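/- For every Banach space X, K₁(X) ≤ G(X) ≤ R(X*), where K₁(X) = sup over weak* null (f_n) in B_{X*} of inf over convex block subsequences of α, G(X) is the analogous quantity with limsup of norms, and R(X*) = sup over sequences in B_{X*} of inf over convex block subsequences (z_n) of ca((z_n)). -/

import Mathlib

open Filter Topology Metric Set NormedSpace

noncomputable section

/-- `y` is a convex block subsequence of `x`. -/
def IsConvexBlock {E : Type*} [AddCommGroup E] [Module ℝ E] (x y : ℕ → E) : Prop :=
  ∃ k : ℕ → ℕ, k 0 = 0 ∧ StrictMono k ∧
    ∀ n, y n ∈ convexHull ℝ (x '' Set.Ico (k n) (k (n + 1)))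

variable (X : Type*) [NormedAddCommGroup X] [NormedSpace ℝ X]

/-- A set is weakly compact if its image in the weak topology is compact. -/
def WeaklyCompact (K : Set X) : Prop := IsCompact (toWeakSpace ℝ X '' K)

/-- A sequence is weakly null. -/
def WeaklyNull (x : ℕ → X) : Prop :=
  ∀ f : X →L[ℝ] ℝ, Tendsto (fun n => f (x n)) atTop (𝓝 0)

/-- A sequence in the dual is weak* null. -/
def WeakStarNull (f : ℕ → X →L[ℝ] ℝ) : Prop :=
  ∀ x : X, Tendsto (fun n => f n x) atTop (𝓝 0)

/-- A sequence in the dual is weak* Cauchy. -/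
def WeakStarCauchy (f : ℕ → X →L[ℝ] ℝ) : Prop :=
  ∀ x : X, ∃ L : ℝ, Tendsto (fun n => f n x) atTop (𝓝 L)

variable {X}

/-- α((f_n)) = sup over weakly compact K ⊆ B_X of limsup_n sup_{x ∈ K} |⟨f_n, x⟩|. -/
def alphaQ (f : ℕ → X →L[ℝ] ℝ) : ℝ :=
  sSup { r | ∃ K : Set X, K ⊆ closedBall 0 1 ∧ WeaklyCompact X K ∧
    r = limsup (fun n => sSup ((fun x => |f n x|) '' K)) atTop }

/-- β((f_n)) = sup over weakly null (x_n) in B_X of limsup_n |⟨f_n, x_n⟩|. -/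
def betaQ (f : ℕ → X →L[ℝ] ℝ) : ℝ :=
  sSup { r | ∃ x : ℕ → X, (∀ n, x n ∈ closedBall (0 : X) 1) ∧ WeaklyNull X x ∧
    r = limsup (fun n => |f n (x n)|) atTop }

/-- ca_{ρ*}((f_n)): measures Mackey-Cauchyness. -/
def caRho (f : ℕ → X →L[ℝ] ℝ) : ℝ :=
  sSup { r | ∃ K : Set X, K ⊆ closedBall 0 1 ∧ WeaklyCompact X K ∧
    r = ⨅ n : ℕ, sSup { t | ∃ k ≥ n, ∃ l ≥ n, ∃ x ∈ K, t = |(f k - f l) x| } }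

/-- ca((z_n)) = inf_n sup_{k,l ≥ n} ‖z_k - z_l‖. -/
def caSeq {E : Type*} [NormedAddCommGroup E] (z : ℕ → E) : ℝ :=
  ⨅ n : ℕ, sSup { r | ∃ k ≥ n, ∃ l ≥ n, r = ‖z k - z l‖ }

variable (X)

def K1 : ℝ :=
  sSup { r | ∃ f : ℕ → X →L[ℝ] ℝ, (∀ n, ‖f n‖ ≤ 1) ∧ WeakStarNull X f ∧
    r = sInf { s | ∃ g, IsConvexBlock f g ∧ s = alphaQ g } }

def K2 : ℝ :=
  sSup { r | ∃ f : ℕ → X →L[ℝ] ℝ, (∀ n, ‖f n‖ ≤ 1) ∧ WeakStarNull X f ∧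
    r = sInf { s | ∃ g, IsConvexBlock f g ∧ s = betaQ g } }

def K3 : ℝ :=
  sSup { r | ∃ f : ℕ → X →L[ℝ] ℝ, (∀ n, ‖f n‖ ≤ 1) ∧ WeakStarCauchy X f ∧
    r = sInf { s | ∃ g, IsConvexBlock f g ∧ s = caRho g } }

/-- Property (K). -/
def PropertyK : Prop :=
  ∀ f : ℕ → X →L[ℝ] ℝ, WeakStarNull X f → ∃ g, IsConvexBlock f g ∧ alphaQ g = 0

/-- The Grothendieck property: every weak* null sequence in the dual is weakly null. -/
def Grothendieck : Prop :=
  ∀ f : ℕ → X →L[ℝ] ℝ, WeakStarNull X f →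
    ∀ Φ : (X →L[ℝ] ℝ) →L[ℝ] ℝ, Tendsto (fun n => Φ (f n)) atTop (𝓝 0)

def GQ : ℝ :=
  sSup { r | ∃ f : ℕ → X →L[ℝ] ℝ, (∀ n, ‖f n‖ ≤ 1) ∧ WeakStarNull X f ∧
    r = sInf { s | ∃ g, IsConvexBlock f g ∧ s = limsup (fun n => ‖g n‖) atTop } }

def RQ : ℝ :=
  sSup { r | ∃ x : ℕ → X, (∀ n, x n ∈ closedBall (0 : X) 1) ∧
    r = sInf { s | ∃ z, IsConvexBlock x z ∧ s = caSeq z } }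

/-- weak* cluster points in the bidual of a sequence in the bidual. -/
def WStarClusterPts (u : ℕ → (X →L[ℝ] ℝ) →L[ℝ] ℝ) : Set ((X →L[ℝ] ℝ) →L[ℝ] ℝ) :=
  { z | MapClusterPt (StrongDual.toWeakDual (𝕜 := ℝ) z) atTop
      (fun n => StrongDual.toWeakDual (𝕜 := ℝ) (u n)) }

def wckQ (A : Set X) : ℝ :=
  sSup { r | ∃ x : ℕ → X, (∀ n, x n ∈ A) ∧
    r = sInf { s | ∃ z ∈ WStarClusterPts X (fun n => inclusionInDoubleDual ℝ X (x n)),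
      ∃ v : X, s = ‖z - inclusionInDoubleDual ℝ X v‖ } }


section Aux

lemma isConvexBlock_self {E : Type*} [AddCommGroup E] [Module ℝ E] (f : ℕ → E) :
    IsConvexBlock f f :=
  ⟨id, rfl, strictMono_id, fun n =>
    subset_convexHull ℝ _ ⟨n, ⟨le_rfl, Nat.lt_succ_self n⟩, rfl⟩⟩

lemma cbs_norm_le {E : Type*} [NormedAddCommGroup E] [NormedSpace ℝ E] {f g : ℕ → E}
    (hf : ∀ n, ‖f n‖ ≤ 1) (h : IsConvexBlock f g) : ∀ n, ‖g n‖ ≤ 1 := by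
  obtain ⟨k, -, -, hmem⟩ := h
  intro n
  have hsub : f '' Set.Ico (k n) (k (n + 1)) ⊆ closedBall (0 : E) 1 := by
    rintro _ ⟨m, -, rfl⟩
    simpa [mem_closedBall_zero_iff] using hf m
  have := convexHull_min hsub (convex_closedBall _ _) (hmem n)
  simpa [mem_closedBall_zero_iff] using this

variable {Y : Type*} [NormedAddCommGroup Y] [NormedSpace ℝ Y]

lemma cbs_weakStarNull {f g : ℕ → Y →L[ℝ] ℝ} (hf : WeakStarNull Y f)
    (h : IsConvexBlock f g) : WeakStarNull Y g := by
  obtain ⟨k, -, hk, hmem⟩ := h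
  intro x
  rw [NormedAddCommGroup.tendsto_nhds_zero]
  intro ε hε
  have hf' := NormedAddCommGroup.tendsto_nhds_zero.mp (hf x) (ε / 2) (by linarith)
  obtain ⟨N, hN⟩ := eventually_atTop.mp hf'
  have hlin : IsLinearMap ℝ (fun h : Y →L[ℝ] ℝ => h x) :=
    ⟨fun a b => rfl, fun c a => rfl⟩
  have hconv : Convex ℝ {h : Y →L[ℝ] ℝ | h x ∈ closedBall (0 : ℝ) (ε / 2)} :=
    (convex_closedBall (0 : ℝ) (ε / 2)).is_linear_preimage hlin
  filter_upwards [eventually_ge_atTop N] with n hn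
  have hsub : f '' Set.Ico (k n) (k (n + 1)) ⊆
      {h : Y →L[ℝ] ℝ | h x ∈ closedBall (0 : ℝ) (ε / 2)} := by
    rintro _ ⟨m, hm, rfl⟩
    have : N ≤ m := le_trans (le_trans hn (hk.le_apply)) hm.1
    simpa [mem_closedBall_zero_iff] using (hN m this).le
  have : g n ∈ {h : Y →L[ℝ] ℝ | h x ∈ closedBall (0 : ℝ) (ε / 2)} :=
    convexHull_min hsub hconv (hmem n)
  have hle : ‖g n x‖ ≤ ε / 2 := by simpa [mem_closedBall_zero_iff] using this
  linarith

lemma limsup_norm_nonneg {E : Type*} [NormedAddCommGroup E] {g : ℕ → E}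
    (hg : ∀ n, ‖g n‖ ≤ 1) : 0 ≤ limsup (fun n => ‖g n‖) atTop :=
  le_limsup_of_frequently_le (Frequently.of_forall fun n => norm_nonneg (g n))
    ⟨1, eventually_atTop.mpr ⟨0, fun n _ => hg n⟩⟩

lemma limsup_norm_le_one {E : Type*} [NormedAddCommGroup E] {g : ℕ → E}
    (hg : ∀ n, ‖g n‖ ≤ 1) : limsup (fun n => ‖g n‖) atTop ≤ 1 :=
  limsup_le_of_le (isCoboundedUnder_le_of_le atTop fun n => norm_nonneg (g n))
    (Eventually.of_forall hg)

lemma alphaQ_le_limsup {g : ℕ → Y →L[ℝ] ℝ} (hg : ∀ n, ‖g n‖ ≤ 1) :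
    alphaQ g ≤ limsup (fun n => ‖g n‖) atTop := by
  refine Real.sSup_le ?_ (limsup_norm_nonneg hg)
  rintro r ⟨K, hK, -, rfl⟩
  refine limsup_le_limsup (Eventually.of_forall fun n => ?_)
    (isCoboundedUnder_le_of_le atTop fun n =>
      Real.sSup_nonneg (by rintro t ⟨x, hx, rfl⟩; exact abs_nonneg _))
    ⟨1, eventually_atTop.mpr ⟨0, fun n _ => hg n⟩⟩
  refine Real.sSup_le ?_ (norm_nonneg _)
  rintro t ⟨x, hx, rfl⟩
  calc |g n x| ≤ ‖g n‖ * ‖x‖ := (g n).le_opNorm x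
    _ ≤ ‖g n‖ * 1 := by
        have := mem_closedBall_zero_iff.mp (hK hx)
        exact mul_le_mul_of_nonneg_left this (norm_nonneg _)
    _ = ‖g n‖ := mul_one _

lemma alphaQ_nonneg {g : ℕ → Y →L[ℝ] ℝ} : 0 ≤ alphaQ g := by
  refine Real.sSup_nonneg' ⟨0, ⟨∅, empty_subset _, ?_, ?_⟩, le_rfl⟩
  · unfold WeaklyCompact
    simpa using isCompact_empty
  · simp [Real.sSup_empty, Filter.limsup_const]

lemma caSeq_nonneg {E : Type*} [NormedAddCommGroup E] (z : ℕ → E) : 0 ≤ caSeq z :=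
  le_ciInf fun n => Real.sSup_nonneg (by rintro r ⟨k, -, l, -, rfl⟩; exact norm_nonneg _)

lemma caSeq_le_two {E : Type*} [NormedAddCommGroup E] {z : ℕ → E}
    (hz : ∀ n, ‖z n‖ ≤ 1) : caSeq z ≤ 2 := by
  have h0 : sSup { r | ∃ k ≥ 0, ∃ l ≥ 0, r = ‖z k - z l‖ } ≤ 2 := by
    refine Real.sSup_le ?_ (by norm_num)
    rintro r ⟨k, -, l, -, rfl⟩
    calc ‖z k - z l‖ ≤ ‖z k‖ + ‖z l‖ := norm_sub_le _ _
      _ ≤ 1 + 1 := add_le_add (hz k) (hz l)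
      _ = 2 := by norm_num
  refine le_trans (ciInf_le ?_ 0) h0
  refine ⟨0, ?_⟩
  rintro _ ⟨n, rfl⟩
  exact Real.sSup_nonneg (by rintro r ⟨k, -, l, -, rfl⟩; exact norm_nonneg _)

lemma limsup_norm_le_caSeq {g : ℕ → Y →L[ℝ] ℝ} (hg : ∀ n, ‖g n‖ ≤ 1)
    (hnull : WeakStarNull Y g) : limsup (fun n => ‖g n‖) atTop ≤ caSeq g := by
  refine le_ciInf fun n => ?_
  set S := sSup { r | ∃ k ≥ n, ∃ l ≥ n, r = ‖g k - g l‖ } with hS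
  have hbdd : BddAbove { r | ∃ k ≥ n, ∃ l ≥ n, r = ‖g k - g l‖ } := by
    refine ⟨2, ?_⟩
    rintro r ⟨k, -, l, -, rfl⟩
    calc ‖g k - g l‖ ≤ ‖g k‖ + ‖g l‖ := norm_sub_le _ _
      _ ≤ 1 + 1 := add_le_add (hg k) (hg l)
      _ = 2 := by norm_num
  have hS0 : 0 ≤ S :=
    Real.sSup_nonneg (by rintro r ⟨k, -, l, -, rfl⟩; exact norm_nonneg _)
  have hkey : ∀ k ≥ n, ‖g k‖ ≤ S := by
    intro k hk
    refine (g k).opNorm_le_bound hS0 fun x => ?_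
    have htend : Tendsto (fun l => ‖g k x - g l x‖) atTop (𝓝 ‖g k x‖) := by
      have := (Tendsto.const_sub (g k x) (hnull x)).norm
      simpa using this
    refine le_of_tendsto htend (eventually_atTop.mpr ⟨n, fun l hl => ?_⟩)
    have h1 : ‖g k x - g l x‖ ≤ ‖g k - g l‖ * ‖x‖ := by
      have := (g k - g l).le_opNorm x
      simpa [ContinuousLinearMap.sub_apply] using this
    refine h1.trans (mul_le_mul_of_nonneg_right ?_ (norm_nonneg x))
    exact le_csSup hbdd ⟨k, hk, l, hl, rfl⟩
  refine limsup_le_of_le (isCoboundedUnder_le_of_le atTop fun k => norm_nonneg (g k)) ?_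
  exact eventually_atTop.mpr ⟨n, hkey⟩

end Aux

theorem stmt18 {X : Type*} [NormedAddCommGroup X] [NormedSpace ℝ X] [CompleteSpace X] :
    K1 X ≤ GQ X ∧ GQ X ≤ RQ (X →L[ℝ] ℝ) := by
  have hGQ_bdd : BddAbove { r | ∃ f : ℕ → X →L[ℝ] ℝ, (∀ n, ‖f n‖ ≤ 1) ∧ WeakStarNull X f ∧
      r = sInf { s | ∃ g, IsConvexBlock f g ∧ s = limsup (fun n => ‖g n‖) atTop } } := by
    refine ⟨1, ?_⟩
    rintro r ⟨f, hf1, -, rfl⟩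
    have h1 : sInf { s | ∃ g, IsConvexBlock f g ∧ s = limsup (fun n => ‖g n‖) atTop } ≤
        limsup (fun n => ‖f n‖) atTop := by
      refine csInf_le ⟨0, ?_⟩ ⟨f, isConvexBlock_self f, rfl⟩
      rintro s ⟨g, hg, rfl⟩
      exact limsup_norm_nonneg (cbs_norm_le hf1 hg)
    exact h1.trans (limsup_norm_le_one hf1)
  have hGQ0 : (0 : ℝ) ≤ GQ X := by
    have hmem : (0 : ℝ) ≤ sInf { s | ∃ g, IsConvexBlock (fun _ => (0 : X →L[ℝ] ℝ)) g ∧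
        s = limsup (fun n => ‖g n‖) atTop } := by
      refine le_csInf ⟨_, fun _ => (0 : X →L[ℝ] ℝ), isConvexBlock_self _, rfl⟩ ?_
      rintro s ⟨g, hg, rfl⟩
      exact limsup_norm_nonneg (cbs_norm_le (fun n => by simp) hg)
    refine le_trans hmem (le_csSup ?_ ?_)
    · exact hGQ_bdd
    · exact ⟨fun _ => 0, fun n => by simp, fun x => by simpa using tendsto_const_nhds, rfl⟩
  constructor
  · -- K1 ≤ GQ
    refine Real.sSup_le ?_ hGQ0
    rintro r ⟨f, hf1, hfn, rfl⟩
    have step1 : sInf { s | ∃ g, IsConvexBlock f g ∧ s = alphaQ g } ≤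
        sInf { s | ∃ g, IsConvexBlock f g ∧ s = limsup (fun n => ‖g n‖) atTop } := by
      have hbddA : BddBelow { s | ∃ g, IsConvexBlock f g ∧ s = alphaQ g } := by
        refine ⟨0, ?_⟩
        rintro a ⟨g, hg, rfl⟩
        exact alphaQ_nonneg
      refine le_csInf ⟨_, f, isConvexBlock_self f, rfl⟩ ?_
      rintro b ⟨g, hg, rfl⟩
      exact (csInf_le hbddA ⟨g, hg, rfl⟩).trans (alphaQ_le_limsup (cbs_norm_le hf1 hg))
    refine step1.trans (le_csSup hGQ_bdd ?_)
    exact ⟨f, hf1, hfn, rfl⟩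
  · -- GQ ≤ RQ
    have hRQ_bdd : BddAbove { r | ∃ x : ℕ → (X →L[ℝ] ℝ), (∀ n, x n ∈ closedBall (0 : X →L[ℝ] ℝ) 1) ∧
        r = sInf { s | ∃ z, IsConvexBlock x z ∧ s = caSeq z } } := by
      refine ⟨2, ?_⟩
      rintro r ⟨x, hx, rfl⟩
      have h1 : sInf { s | ∃ z, IsConvexBlock x z ∧ s = caSeq z } ≤ caSeq x := by
        refine csInf_le ⟨0, ?_⟩ ⟨x, isConvexBlock_self x, rfl⟩
        rintro s ⟨z, hz, rfl⟩
        exact caSeq_nonneg z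
      exact h1.trans (caSeq_le_two fun n => mem_closedBall_zero_iff.mp (hx n))
    have hRQ0 : (0 : ℝ) ≤ RQ (X →L[ℝ] ℝ) := by
      have hmem : (0 : ℝ) ≤ sInf { s | ∃ z, IsConvexBlock (fun _ => (0 : X →L[ℝ] ℝ)) z ∧
          s = caSeq z } := by
        refine le_csInf ⟨_, fun _ => (0 : X →L[ℝ] ℝ), isConvexBlock_self _, rfl⟩ ?_
        rintro s ⟨z, hz, rfl⟩
        exact caSeq_nonneg z
      refine le_trans hmem (le_csSup hRQ_bdd ?_)
      exact ⟨fun _ => 0, fun n => by simp, rfl⟩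
    refine Real.sSup_le ?_ hRQ0
    rintro r ⟨f, hf1, hfn, rfl⟩
    have step1 : sInf { s | ∃ g, IsConvexBlock f g ∧ s = limsup (fun n => ‖g n‖) atTop } ≤
        sInf { s | ∃ z, IsConvexBlock f z ∧ s = caSeq z } := by
      have hbddA : BddBelow { s | ∃ g, IsConvexBlock f g ∧
          s = limsup (fun n => ‖g n‖) atTop } := by
        refine ⟨0, ?_⟩
        rintro a ⟨g, hg, rfl⟩
        exact limsup_norm_nonneg (cbs_norm_le hf1 hg)
      refine le_csInf ⟨_, f, isConvexBlock_self f, rfl⟩ ?_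
      rintro b ⟨z, hz, rfl⟩
      exact (csInf_le hbddA ⟨z, hz, rfl⟩).trans
        (limsup_norm_le_caSeq (cbs_norm_le hf1 hz) (cbs_weakStarNull hfn hz))
    refine step1.trans (le_csSup hRQ_bdd ?_)
    exact ⟨f, fun n => mem_closedBall_zero_iff.mpr (hf1 n), rfl⟩
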